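/- Let v, ε be vectors with ε = αv + ε_⊥, ⟨ε_⊥, v⟩ = 0, v ≠ 0, |α| ≤ K, and ‖ε_⊥‖ ≥ ‖v‖. Then the inner product of the unit vectors satisfies ⟨v/‖v‖, (v+ε)/‖v+ε‖⟩ ≤ (1+K)/√((1+K)²+1). -/

import Mathlib

/-- Upper bound on the inner product of the normalized perturbed and original
vectors: `⟪v̂, ŵ⟫ ≤ (1+K)/√((1+K)²+1)` when the orthogonal noise dominates. -/
theorem inner_unit_vectors_upper_bound {E : Type*} [NormedAddCommGroup E]
    [InnerProductSpace ℝ E]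
    (v ε εperp : E) (α K : ℝ)
    (hv : v ≠ 0)
    (hdec : ε = α • v + εperp)
    (hperp : (inner ℝ εperp v : ℝ) = 0)
    (hα : |α| ≤ K)
    (hdom : ‖v‖ ≤ ‖εperp‖) :
    (inner ℝ (‖v‖⁻¹ • v) (‖v + ε‖⁻¹ • (v + ε)) : ℝ) ≤
      (1 + K) / Real.sqrt ((1 + K) ^ 2 + 1) := by
  set s := 1 + K with hs
  have hK0 : 0 ≤ K := le_trans (abs_nonneg α) hα
  have hs1 : (1:ℝ) ≤ s := by linarith
  have hnv : 0 < ‖v‖ := norm_pos_iff.mpr hv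
  have hperp' : (inner ℝ v εperp : ℝ) = 0 := by
    rw [real_inner_comm]; exact hperp
  have hvε : v + ε = (1 + α) • v + εperp := by
    rw [hdec]; module
  have hinner : (inner ℝ v (v + ε) : ℝ) = (1 + α) * ‖v‖ ^ 2 := by
    rw [hvε, inner_add_right, real_inner_smul_right, hperp', real_inner_self_eq_norm_sq]
    ring
  have hnormsq : ‖v + ε‖ ^ 2 = (1 + α) ^ 2 * ‖v‖ ^ 2 + ‖εperp‖ ^ 2 := by
    rw [hvε, norm_add_sq_real, real_inner_smul_left, hperp', norm_smul,
      Real.norm_eq_abs, mul_pow, sq_abs]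
    ring
  have hnw : 0 < ‖v + ε‖ := by
    have h2 : 0 < ‖v + ε‖ ^ 2 := by nlinarith
    nlinarith [norm_nonneg (v + ε)]
  have hsq : 0 < Real.sqrt (s ^ 2 + 1) := Real.sqrt_pos.mpr (by nlinarith)
  have hsqsq : Real.sqrt (s ^ 2 + 1) ^ 2 = s ^ 2 + 1 := Real.sq_sqrt (by nlinarith)
  have hLHS : (inner ℝ (‖v‖⁻¹ • v) (‖v + ε‖⁻¹ • (v + ε)) : ℝ)
      = (1 + α) * ‖v‖ / ‖v + ε‖ := by
    rw [real_inner_smul_left, real_inner_smul_right, hinner]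
    field_simp
  rw [hLHS]
  rcases le_or_gt (1 + α) 0 with h | h
  · have : (1 + α) * ‖v‖ / ‖v + ε‖ ≤ 0 := by
      apply div_nonpos_of_nonpos_of_nonneg
      · exact mul_nonpos_of_nonpos_of_nonneg h hnv.le
      · exact hnw.le
    have hr : 0 ≤ s / Real.sqrt (s ^ 2 + 1) := by positivity
    linarith
  · rw [div_le_div_iff₀ hnw hsq]
    have hαK : 1 + α ≤ s := by
      have := (abs_le.mp hα).2; linarith
    have h1 : ((1 + α) * ‖v‖ * Real.sqrt (s ^ 2 + 1)) ^ 2 ≤ (s * ‖v + ε‖) ^ 2 := by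
      have e1 : ((1 + α) * ‖v‖ * Real.sqrt (s ^ 2 + 1)) ^ 2
          = (1 + α) ^ 2 * ‖v‖ ^ 2 * (s ^ 2 + 1) := by
        rw [mul_pow, mul_pow, hsqsq]
      have e2 : (s * ‖v + ε‖) ^ 2 = s ^ 2 * ((1 + α) ^ 2 * ‖v‖ ^ 2 + ‖εperp‖ ^ 2) := by
        rw [mul_pow, hnormsq]
      have h2 : (1 + α) * ‖v‖ ≤ s * ‖εperp‖ :=
        mul_le_mul hαK hdom hnv.le (by linarith)
      have h3 : ((1 + α) * ‖v‖) ^ 2 ≤ (s * ‖εperp‖) ^ 2 :=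
        pow_le_pow_left₀ (by positivity) h2 2
      rw [e1, e2]
      nlinarith [h3]
    have hl : 0 ≤ (1 + α) * ‖v‖ * Real.sqrt (s ^ 2 + 1) := by positivity
    have hr : 0 ≤ s * ‖v + ε‖ := by positivity
    nlinarith
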